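/- Extreme point criterion: Let E, F be Riesz spaces with F Dedekind complete, G a subspace of E, T : G → F monotone sublinear, and S a monotone sublinear extension of T to E. If inf{S(|x − y|) : y ∈ G} = 0 for every x ∈ E, then S is an extreme point of the convex set ℰ(T) of all monotone sublinear extensions of T. -/

import Mathlib

/-- extreme point criterion: if a monotone sublinear extension `S`
of `T` satisfies `inf {S |x - y| : y ∈ G} = 0` for every `x ∈ E`, then `S` is an
extreme point of the convex set of monotone sublinear extensions of `T`. -/
theorem stmt_19 {E F : Type*}
    [Lattice E] [AddCommGroup E] [Module ℝ E]
    [CovariantClass E E (· + ·) (· ≤ ·)] [PosSMulMono ℝ E]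
    [ConditionallyCompleteLattice F] [AddCommGroup F] [Module ℝ F]
    [CovariantClass F F (· + ·) (· ≤ ·)] [PosSMulMono ℝ F]
    (G : Submodule ℝ E)
    (T : G → F)
    (S : E → F)
    (hSmono : ∀ x y : E, x ≤ y → S x ≤ S y)
    (hSsub : ∀ x y : E, S (x + y) ≤ S x + S y)
    (hShom : ∀ (l : ℝ) (x : E), 0 ≤ l → S (l • x) = l • S x)
    (hSext : ∀ a : G, S (a : E) = T a)
    (hinf : ∀ x : E, IsGLB {v : F | ∃ y : G, v = S |x - (y : E)|} 0) :
    ∀ Q R : E → F,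
      ((∀ x y : E, x ≤ y → Q x ≤ Q y) ∧ (∀ x y : E, Q (x + y) ≤ Q x + Q y) ∧
        (∀ (l : ℝ) (x : E), 0 ≤ l → Q (l • x) = l • Q x) ∧
        (∀ a : G, Q (a : E) = T a)) →
      ((∀ x y : E, x ≤ y → R x ≤ R y) ∧ (∀ x y : E, R (x + y) ≤ R x + R y) ∧
        (∀ (l : ℝ) (x : E), 0 ≤ l → R (l • x) = l • R x) ∧
        (∀ a : G, R (a : E) = T a)) →
      ∀ l : ℝ, 0 < l → l < 1 →
        (∀ x : E, S x = l • Q x + (1 - l) • R x) →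
        (∀ x : E, Q x = S x) ∧ (∀ x : E, R x = S x) := by
  intro Q R hQ hR l hl0 hl1 hconv
  obtain ⟨hQmono, hQsub, hQhom, hQext⟩ := hQ
  obtain ⟨hRmono, hRsub, hRhom, hRext⟩ := hR
  have hl1' : (0:ℝ) < 1 - l := by linarith
  have hQ0 : Q 0 = 0 := by simpa using hQhom 0 0 le_rfl
  have hR0 : R 0 = 0 := by simpa using hRhom 0 0 le_rfl
  set c : ℝ := l⁻¹ + (1 - l)⁻¹ with hc
  have hcpos : 0 < c := by positivity
  have key : ∀ x : E, Q x = R x := by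
    intro x
    have bound : ∀ (P : E → F), (∀ a b : E, a ≤ b → P a ≤ P b) →
        (∀ a b : E, P (a + b) ≤ P a + P b) → (∀ a : G, P (a : E) = T a) →
        ∀ y : G, P x - T y ≤ P |x - (y : E)| ∧ T y - P x ≤ P |x - (y : E)| := by
      intro P Pmono Psub Pext y
      constructor
      · have h1 : P x ≤ P (x - (y : E)) + P (y : E) := by
          have := Psub (x - (y : E)) (y : E)
          simpa using this
        have h2 : P (x - (y : E)) ≤ P |x - (y : E)| := Pmono _ _ (le_abs_self _)
        rw [← Pext y, sub_le_iff_le_add]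
        exact h1.trans (add_le_add_left h2 _)
      · have h1 : P (y : E) ≤ P ((y : E) - x) + P x := by
          have := Psub ((y : E) - x) x
          simpa using this
        have h2 : P ((y : E) - x) ≤ P |x - (y : E)| := by
          apply Pmono
          rw [abs_sub_comm]
          exact le_abs_self _
        rw [← Pext y, sub_le_iff_le_add]
        exact h1.trans (add_le_add_left h2 _)
    have habs : ∀ y : G, Q |x - (y : E)| + R |x - (y : E)| ≤ c • S |x - (y : E)| := by
      intro y
      have hQnn : 0 ≤ Q |x - (y : E)| := hQ0 ▸ hQmono 0 _ (abs_nonneg _)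
      have hRnn : 0 ≤ R |x - (y : E)| := hR0 ▸ hRmono 0 _ (abs_nonneg _)
      have hS : S |x - (y : E)| = l • Q |x - (y : E)| + (1 - l) • R |x - (y : E)| :=
        hconv _
      have h1 : l • Q |x - (y : E)| ≤ S |x - (y : E)| := by
        rw [hS]
        exact le_add_of_nonneg_right (smul_nonneg hl1'.le hRnn)
      have h2 : (1 - l) • R |x - (y : E)| ≤ S |x - (y : E)| := by
        rw [hS]
        exact le_add_of_nonneg_left (smul_nonneg hl0.le hQnn)
      have h1' : Q |x - (y : E)| ≤ l⁻¹ • S |x - (y : E)| := by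
        have := smul_le_smul_of_nonneg_left h1 (inv_nonneg.mpr hl0.le)
        rwa [smul_smul, inv_mul_cancel₀ hl0.ne', one_smul] at this
      have h2' : R |x - (y : E)| ≤ (1 - l)⁻¹ • S |x - (y : E)| := by
        have := smul_le_smul_of_nonneg_left h2 (inv_nonneg.mpr hl1'.le)
        rwa [smul_smul, inv_mul_cancel₀ hl1'.ne', one_smul] at this
      calc Q |x - (y : E)| + R |x - (y : E)|
          ≤ l⁻¹ • S |x - (y : E)| + (1 - l)⁻¹ • S |x - (y : E)| := add_le_add h1' h2'
        _ = c • S |x - (y : E)| := by rw [hc, add_smul]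
    have hdiff : ∀ y : G, Q x - R x ≤ c • S |x - (y : E)| := by
      intro y
      have h1 := (bound Q hQmono hQsub hQext y).1
      have h2 := (bound R hRmono hRsub hRext y).2
      calc Q x - R x = (Q x - T y) + (T y - R x) := by abel
        _ ≤ Q |x - (y : E)| + R |x - (y : E)| := add_le_add h1 h2
        _ ≤ c • S |x - (y : E)| := habs y
    have hdiff' : ∀ y : G, R x - Q x ≤ c • S |x - (y : E)| := by
      intro y
      have h1 := (bound R hRmono hRsub hRext y).1
      have h2 := (bound Q hQmono hQsub hQext y).2
      calc R x - Q x = (T y - Q x) + (R x - T y) := by abel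
        _ ≤ Q |x - (y : E)| + R |x - (y : E)| := add_le_add h2 h1
        _ ≤ c • S |x - (y : E)| := habs y
    have conclude : ∀ w : F, (∀ y : G, w ≤ c • S |x - (y : E)|) → w ≤ 0 := by
      intro w hw
      have hlb : c⁻¹ • w ∈ lowerBounds {v : F | ∃ y : G, v = S |x - (y : E)|} := by
        rintro v ⟨y, rfl⟩
        have := smul_le_smul_of_nonneg_left (hw y) (inv_nonneg.mpr hcpos.le)
        rwa [smul_smul, inv_mul_cancel₀ hcpos.ne', one_smul] at this
      have h0 : c⁻¹ • w ≤ 0 := (hinf x).2 hlb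
      have := smul_le_smul_of_nonneg_left h0 hcpos.le
      rwa [smul_smul, mul_inv_cancel₀ hcpos.ne', one_smul, smul_zero] at this
    exact le_antisymm (sub_nonpos.mp (conclude _ hdiff)) (sub_nonpos.mp (conclude _ hdiff'))
  have hQS : ∀ x : E, Q x = S x := by
    intro x
    rw [hconv x, key x, ← add_smul]
    norm_num
  refine ⟨hQS, fun x => ?_⟩
  rw [← key x]
  exact hQS x
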